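/- The three-dimensional complex vector space with basis {x,y,z}, bracket [y,z]=z, [x,z]=y−z, [x,y]=x+αz, and skew form ω with ω(y,z)=ω(x,z)=0, ω(x,y)=−1, is an ω-Lie algebra for every α ∈ ℂ, and it is simple (has no nonzero proper ideals). -/

import Mathlib

noncomputable def Abracket (α : ℂ) (u v : ℂ × ℂ × ℂ) : ℂ × ℂ × ℂ :=
  (u.1 * v.2.1 - v.1 * u.2.1,
   u.1 * v.2.2 - v.1 * u.2.2,
   α * (u.1 * v.2.1 - v.1 * u.2.1) - (u.1 * v.2.2 - v.1 * u.2.2)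
     + (u.2.1 * v.2.2 - v.2.1 * u.2.2))

noncomputable def Aomega (u v : ℂ × ℂ × ℂ) : ℂ :=
  -(u.1 * v.2.1 - v.1 * u.2.1)

lemma mem_all (I : Submodule ℂ (ℂ × ℂ × ℂ))
    (hx : ((1:ℂ),(0:ℂ),(0:ℂ)) ∈ I) (hy : ((0:ℂ),(1:ℂ),(0:ℂ)) ∈ I)
    (hz : ((0:ℂ),(0:ℂ),(1:ℂ)) ∈ I) : I = ⊤ := by
  rw [Submodule.eq_top_iff']
  intro v
  have hv : v = v.1 • ((1:ℂ),(0:ℂ),(0:ℂ)) + v.2.1 • ((0:ℂ),(1:ℂ),(0:ℂ))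
      + v.2.2 • ((0:ℂ),(0:ℂ),(1:ℂ)) := by
    refine Prod.ext ?_ (Prod.ext ?_ ?_) <;> simp
  rw [hv]
  exact add_mem (add_mem (I.smul_mem _ hx) (I.smul_mem _ hy)) (I.smul_mem _ hz)

lemma top_of (α : ℂ) (I : Submodule ℂ (ℂ × ℂ × ℂ))
    (hI : ∀ a ∈ I, ∀ b : ℂ × ℂ × ℂ, Abracket α a b ∈ I)
    (a : ℂ × ℂ × ℂ) (ha : a ∈ I) (h1 : a.1 ≠ 0) : I = ⊤ := by
  have hz : ((0:ℂ),(0:ℂ),(1:ℂ)) ∈ I := by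
    have h := hI _ (hI a ha ((0:ℂ),(0:ℂ),(1:ℂ))) ((0:ℂ),(0:ℂ),(1:ℂ))
    have e : ((0:ℂ),(0:ℂ),(1:ℂ))
        = a.1⁻¹ • Abracket α (Abracket α a ((0:ℂ),(0:ℂ),(1:ℂ))) ((0:ℂ),(0:ℂ),(1:ℂ)) := by
      refine Prod.ext ?_ (Prod.ext ?_ ?_) <;> simp [Abracket] <;> (try field_simp) <;> (try ring_nf) <;> try (right; ring)
    rw [e]; exact I.smul_mem _ h
  have hy : ((0:ℂ),(1:ℂ),(0:ℂ)) ∈ I := by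
    have h : Abracket α a ((0:ℂ),(0:ℂ),(1:ℂ))
        - (a.2.1 - a.1) • ((0:ℂ),(0:ℂ),(1:ℂ)) ∈ I :=
      sub_mem (hI a ha _) (I.smul_mem _ hz)
    have e : ((0:ℂ),(1:ℂ),(0:ℂ)) = a.1⁻¹ • (Abracket α a ((0:ℂ),(0:ℂ),(1:ℂ))
        - (a.2.1 - a.1) • ((0:ℂ),(0:ℂ),(1:ℂ))) := by
      refine Prod.ext ?_ (Prod.ext ?_ ?_) <;> simp [Abracket] <;> (try field_simp) <;> (try ring_nf) <;> (try (right; ring)) <;> simp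
    rw [e]; exact I.smul_mem _ h
  have hx : ((1:ℂ),(0:ℂ),(0:ℂ)) ∈ I := by
    have h : Abracket α a ((0:ℂ),(1:ℂ),(0:ℂ))
        - (α * a.1 - a.2.2) • ((0:ℂ),(0:ℂ),(1:ℂ)) ∈ I :=
      sub_mem (hI a ha _) (I.smul_mem _ hz)
    have e : ((1:ℂ),(0:ℂ),(0:ℂ)) = a.1⁻¹ • (Abracket α a ((0:ℂ),(1:ℂ),(0:ℂ))
        - (α * a.1 - a.2.2) • ((0:ℂ),(0:ℂ),(1:ℂ))) := by
      refine Prod.ext ?_ (Prod.ext ?_ ?_) <;> simp [Abracket] <;> (try field_simp) <;> (try ring_nf) <;> try (right; ring)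
    rw [e]; exact I.smul_mem _ h
  exact mem_all I hx hy hz

theorem Aalpha_omegaLie_simple (α : ℂ) :
    (∀ u v : ℂ × ℂ × ℂ, Abracket α u v = - Abracket α v u) ∧
    (∀ u v w : ℂ × ℂ × ℂ,
      Abracket α (Abracket α u v) w + Abracket α (Abracket α v w) u
          + Abracket α (Abracket α w u) v
        = Aomega u v • w + Aomega v w • u + Aomega w u • v) ∧
    (∀ I : Submodule ℂ (ℂ × ℂ × ℂ),
      (∀ a ∈ I, ∀ b : ℂ × ℂ × ℂ, Abracket α a b ∈ I) → I = ⊥ ∨ I = ⊤) := by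
  refine ⟨?_, ?_, ?_⟩
  · intro u v
    refine Prod.ext ?_ (Prod.ext ?_ ?_) <;> simp [Abracket] <;> ring
  · intro u v w
    refine Prod.ext ?_ (Prod.ext ?_ ?_) <;> simp [Abracket, Aomega] <;> ring
  · intro I hI
    by_cases hbot : I = ⊥
    · exact Or.inl hbot
    right
    obtain ⟨a, ha, hne⟩ := Submodule.exists_mem_ne_zero_of_ne_bot hbot
    by_cases h1 : a.1 ≠ 0
    · exact top_of α I hI a ha h1
    push_neg at h1
    by_cases h2 : a.2.1 ≠ 0
    · refine top_of α I hI _ (hI a ha ((1:ℂ),(0:ℂ),(0:ℂ))) ?_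
      simp [Abracket, h1, h2]
    push_neg at h2
    have h3 : a.2.2 ≠ 0 := by
      intro h3
      exact hne (Prod.ext h1 (Prod.ext h2 h3))
    refine top_of α I hI _ (hI _ (hI a ha ((1:ℂ),(0:ℂ),(0:ℂ))) ((1:ℂ),(0:ℂ),(0:ℂ))) ?_
    simp [Abracket, h1, h2, h3]
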